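/- arXiv:1504.04820 — 2 statements merged into one kernel-verified Lean document; each statement's English description precedes it below -/
import Mathlib

section
/- If every boundary vertex of a connected graph G is simplicial (i.e., ∂(G)=σ(G)), then the strong resolving graph of G is a complete graph on the vertex set ∂(G) together with isolated vertices elsewhere; in particular, for any tree T with l leaves, the strong resolving graph of T restricted to its non-isolated vertices is the complete graph K_l on the leaves. -/
open SimpleGraph

variable {V : Type*}

/-- `w` strongly resolves `u` and `v` in `G`. -/
def StronglyResolves (G : SimpleGraph V) (w u v : V) : Prop :=
  G.dist u w = G.dist u v + G.dist v w ∨ G.dist v w = G.dist v u + G.dist u w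

/-- `S` is a strong metric generator for `G`. -/
def IsStrongMetricGen (G : SimpleGraph V) (S : Set V) : Prop :=
  ∀ u v : V, u ≠ v → ∃ w ∈ S, StronglyResolves G w u v

/-- The simultaneous strong metric dimension of a family of graphs. -/
noncomputable def SdS (𝒢 : Set (SimpleGraph V)) : ℕ :=
  sInf {n | ∃ S : Set V, S.ncard = n ∧ ∀ G ∈ 𝒢, IsStrongMetricGen G S}

/-- The strong metric dimension of a single graph. -/
noncomputable def sdim (G : SimpleGraph V) : ℕ := SdS {G}

/-- `u` is maximally distant from `v` in `G`. -/
def MaxDistantFrom (G : SimpleGraph V) (u v : V) : Prop :=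
  ∀ w : V, G.Adj u w → G.dist v w ≤ G.dist v u

/-- `u` and `v` are mutually maximally distant in `G`. -/
def MutuallyMaxDistant (G : SimpleGraph V) (u v : V) : Prop :=
  MaxDistantFrom G u v ∧ MaxDistantFrom G v u

/-- The strong resolving graph of `G`. -/
def SRG (G : SimpleGraph V) : SimpleGraph V where
  Adj u v := u ≠ v ∧ MutuallyMaxDistant G u v
  symm := by
    refine ⟨fun u v h => ?_⟩
    exact ⟨h.1.symm, h.2.2, h.2.1⟩
  loopless := by refine ⟨fun u h => ?_⟩; exact h.1 rfl

/-- The boundary of `G`: vertices mutually maximally distant from some vertex. -/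
def Boundary (G : SimpleGraph V) : Set V :=
  {u | ∃ v, MutuallyMaxDistant G u v}

/-- `S` is a vertex cover of `G`. -/
def IsVertexCover (G : SimpleGraph V) (S : Set V) : Prop :=
  ∀ u v : V, G.Adj u v → u ∈ S ∨ v ∈ S

/-- The vertex cover number. -/
noncomputable def vcNum (G : SimpleGraph V) : ℕ :=
  sInf {n | ∃ S : Set V, S.ncard = n ∧ _root_.IsVertexCover G S}

/-- A strong resolving cover: simultaneously a vertex cover and a strong metric generator. -/
def IsStrongResCover (G : SimpleGraph V) (S : Set V) : Prop :=
  _root_.IsVertexCover G S ∧ IsStrongMetricGen G S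

/-- The strong resolving cover number `β_s`. -/
noncomputable def betaS (G : SimpleGraph V) : ℕ :=
  sInf {n | ∃ S : Set V, S.ncard = n ∧ IsStrongResCover G S}

/-- `G` is 2-antipodal. -/
def TwoAntipodal (G : SimpleGraph V) : Prop :=
  ∀ x : V, ∃! y : V, G.dist x y = G.diam

/-- `v` is a leaf of `G` (degree one). -/
def IsLeaf (G : SimpleGraph V) (v : V) : Prop := ∃! w : V, G.Adj v w
/-- `v` is a simplicial vertex of `G`. -/
def IsSimplicial (G : SimpleGraph V) (v : V) : Prop :=
  ∀ x ∈ G.neighborSet v, ∀ y ∈ G.neighborSet v, x ≠ y → G.Adj x y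

section Helpers
open SimpleGraph.Walk

/-- There is a neighbor of `v` on a shortest path from `u` to `v`. -/
lemma exists_adj_dist {G : SimpleGraph V} (hc : G.Connected) {u v : V} (hne : u ≠ v) :
    ∃ x, G.Adj v x ∧ G.dist u x + 1 = G.dist u v := by
  obtain ⟨p, hp⟩ := hc.exists_walk_length_eq_dist v u
  have hnn : ¬ p.Nil := not_nil_of_ne (Ne.symm hne)
  obtain ⟨x, h, q, rfl⟩ := not_nil_iff.mp hnn
  refine ⟨x, h, ?_⟩
  have h1 : G.dist u x ≤ q.length := by
    rw [G.dist_comm]; exact dist_le q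
  have h2 : q.length + 1 = G.dist v u := by simpa using hp
  have h3 : G.dist u v ≤ G.dist u x + 1 := by
    calc G.dist u v ≤ G.dist u x + G.dist x v := hc.dist_triangle
    _ ≤ G.dist u x + 1 := by
        have := dist_eq_one_iff_adj.mpr h.symm
        omega
  have h4 : G.dist v u = G.dist u v := G.dist_comm
  omega

lemma simplicial_maxdist {G : SimpleGraph V} (hc : G.Connected) {u v : V}
    (hs : IsSimplicial G v) (hne : u ≠ v) : MaxDistantFrom G v u := by
  intro w hvw
  obtain ⟨x, hvx, hx⟩ := exists_adj_dist hc hne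
  by_cases hwx : w = x
  · subst hwx; omega
  · have hadj : G.Adj x w := hs x hvx w hvw (fun h => hwx h.symm)
    have : G.dist u w ≤ G.dist u x + G.dist x w := hc.dist_triangle
    have : G.dist x w = 1 := dist_eq_one_iff_adj.mpr hadj
    omega

lemma tree_dist_adj {T : SimpleGraph V} (hT : T.IsTree) {u w : V} (h : T.Adj u w) (v : V) :
    T.dist v w = T.dist v u + 1 ∨ T.dist v u = T.dist v w + 1 := by
  classical
  have hc := hT.isConnected
  obtain ⟨p, hp⟩ := hc.exists_walk_length_eq_dist v w
  by_cases hu : u ∈ p.support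
  · left
    have hts := p.take_spec hu
    have hlen : (p.takeUntil u hu).length + (p.dropUntil u hu).length = p.length := by
      conv_rhs => rw [← hts]
      rw [length_append]
    have h1 : T.dist v u ≤ (p.takeUntil u hu).length := dist_le _
    have h2 : T.dist u w ≤ (p.dropUntil u hu).length := dist_le _
    have h3 : T.dist v w ≤ T.dist v u + T.dist u w := hc.dist_triangle
    have h4 : T.dist u w = 1 := dist_eq_one_iff_adj.mpr h
    omega
  · right
    have hpath : p.IsPath := p.isPath_of_length_eq_dist hp
    have hq : (p.concat h.symm).IsPath := by
      have : (p.concat h.symm).reverse.IsPath := by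
        rw [reverse_concat]
        exact hpath.reverse.cons (by rw [support_reverse]; simpa using hu)
      simpa only [reverse_reverse] using this.reverse
    obtain ⟨r, hr⟩ := hc.exists_walk_length_eq_dist v u
    have hrpath : r.IsPath := r.isPath_of_length_eq_dist hr
    obtain ⟨q', hq', huniq⟩ := hT.existsUnique_path v u
    have := (huniq _ hq).trans (huniq _ hrpath).symm
    have hlen : (p.concat h.symm).length = r.length := by rw [this]
    rw [length_concat, hp, hr] at hlen
    omega

/-- In a tree, a vertex cannot have two distinct neighbours both closer to `v`. -/
lemma tree_unique_closer {T : SimpleGraph V} (hT : T.IsTree) {u v w₁ w₂ : V}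
    (h1 : T.Adj w₁ u) (h2 : T.Adj w₂ u)
    (d1 : T.dist v w₁ + 1 = T.dist v u) (d2 : T.dist v w₂ + 1 = T.dist v u) : w₁ = w₂ := by
  classical
  have hc := hT.isConnected
  obtain ⟨p₁, hp₁⟩ := hc.exists_walk_length_eq_dist v w₁
  obtain ⟨p₂, hp₂⟩ := hc.exists_walk_length_eq_dist v w₂
  have hu₁ : u ∉ p₁.support := by
    intro hu
    have := (dist_le (p₁.takeUntil u hu)).trans (p₁.length_takeUntil_le hu)
    omega
  have hu₂ : u ∉ p₂.support := by
    intro hu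
    have := (dist_le (p₂.takeUntil u hu)).trans (p₂.length_takeUntil_le hu)
    omega
  have hq₁ : (p₁.concat h1).IsPath := by
    have : (p₁.concat h1).reverse.IsPath := by
      rw [reverse_concat]
      exact (p₁.isPath_of_length_eq_dist hp₁).reverse.cons (by rw [support_reverse]; simpa using hu₁)
    simpa only [reverse_reverse] using this.reverse
  have hq₂ : (p₂.concat h2).IsPath := by
    have : (p₂.concat h2).reverse.IsPath := by
      rw [reverse_concat]
      exact (p₂.isPath_of_length_eq_dist hp₂).reverse.cons (by rw [support_reverse]; simpa using hu₂)
    simpa only [reverse_reverse] using this.reverse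
  obtain ⟨q', hq', huniq⟩ := hT.existsUnique_path v u
  have heq : p₁.concat h1 = p₂.concat h2 := (huniq _ hq₁).trans (huniq _ hq₂).symm
  obtain ⟨hv, -⟩ := concat_inj heq
  exact hv
end Helpers

theorem stmt3 [Fintype V] :
    (∀ G : SimpleGraph V, G.Connected → Boundary G = {v : V | IsSimplicial G v} →
      ∀ u v : V, (SRG G).Adj u v ↔ u ≠ v ∧ u ∈ Boundary G ∧ v ∈ Boundary G) ∧
    (∀ T : SimpleGraph V, T.IsTree →
      ∀ u v : V, (SRG T).Adj u v ↔ u ≠ v ∧ IsLeaf T u ∧ IsLeaf T v) := by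
  constructor
  · intro G hc hbd u v
    constructor
    · rintro ⟨hne, hmmd⟩
      exact ⟨hne, ⟨v, hmmd⟩, ⟨u, hmmd.2, hmmd.1⟩⟩
    · rintro ⟨hne, hu, hv⟩
      have hsu : IsSimplicial G u := by rw [hbd] at hu; exact hu
      have hsv : IsSimplicial G v := by rw [hbd] at hv; exact hv
      exact ⟨hne, simplicial_maxdist hc hsu (Ne.symm hne), simplicial_maxdist hc hsv hne⟩
  · intro T hT u v
    have hc := hT.isConnected
    constructor
    · rintro ⟨hne, hmmd⟩
      refine ⟨hne, ?_, ?_⟩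
      · -- u is a leaf
        obtain ⟨x, hux, hx⟩ := exists_adj_dist hc (Ne.symm hne)
        refine ⟨x, hux, ?_⟩
        intro w huw
        have hle : T.dist v w ≤ T.dist v u := hmmd.1 w huw
        have := tree_dist_adj hT huw v
        have hdw : T.dist v w + 1 = T.dist v u := by omega
        exact tree_unique_closer hT huw.symm hux.symm hdw hx
      · -- v is a leaf
        obtain ⟨x, hvx, hx⟩ := exists_adj_dist hc hne
        refine ⟨x, hvx, ?_⟩
        intro w hvw
        have hle : T.dist u w ≤ T.dist u v := hmmd.2 w hvw
        have := tree_dist_adj hT hvw u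
        have hdw : T.dist u w + 1 = T.dist u v := by omega
        exact tree_unique_closer hT hvw.symm hvx.symm hdw hx
    · rintro ⟨hne, ⟨xu, hxu, huu⟩, ⟨xv, hxv, huv⟩⟩
      refine ⟨hne, ?_, ?_⟩
      · intro w huw
        obtain ⟨x, hux, hx⟩ := exists_adj_dist hc (Ne.symm hne)
        have h1 : w = xu := huu w huw
        have h2 : x = xu := huu x hux
        rw [h1, ← h2]
        omega
      · intro w hvw
        obtain ⟨x, hvx, hx⟩ := exists_adj_dist hc hne
        have h1 : w = xv := huv w hvw
        have h2 : x = xv := huv x hvx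
        rw [h1, ← h2]
        omega
end

section
/- For an odd cycle C_{2k+1}, the strong resolving graph of C_{2k+1} is isomorphic to C_{2k+1} itself. -/
open SimpleGraph

variable {V : Type*}

open Fin.CommRing

namespace CycAux

variable {n : ℕ} [NeZero n]

lemma fin_sub_val (x y : Fin n) (h : y.val ≤ x.val) : (x - y).val = x.val - y.val := by
  rw [Fin.sub_def]
  have hx := x.isLt
  have hy := y.isLt
  have h1 : (n - y.val) + x.val = (x.val - y.val) + n := by omega
  simp only [h1, Nat.add_mod_right]
  exact Nat.mod_eq_of_lt (by omega)

lemma fin_sub_val' (x y : Fin n) (h : x.val < y.val) : (x - y).val = x.val + n - y.val := by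
  rw [Fin.sub_def]
  have hx := x.isLt
  have hy := y.isLt
  have h1 : (n - y.val) + x.val = x.val + n - y.val := by omega
  simp only [h1]
  exact Nat.mod_eq_of_lt (by omega)

lemma fin_sub_add_sub (x y : Fin n) (h : x ≠ y) :
    (x - y).val + (y - x).val = n := by
  have hxy : x.val ≠ y.val := fun hc => h (Fin.ext hc)
  rcases le_or_gt y.val x.val with hle | hlt
  · rw [fin_sub_val x y hle, fin_sub_val' y x (by omega)]
    have := x.isLt; omega
  · rw [fin_sub_val' x y hlt, fin_sub_val y x (le_of_lt hlt)]
    have := y.isLt; omega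

lemma val_one_of (hn : 2 ≤ n) : (1 : Fin n).val = 1 := by
  rw [Fin.val_one']
  exact Nat.mod_eq_of_lt (by omega)

lemma adj_succ (hn : 2 ≤ n) (u : Fin n) : (cycleGraph n).Adj u (u + 1) := by
  rw [cycleGraph_adj']
  right
  have h1 : (u + 1) - u = 1 := by ring
  rw [h1, val_one_of hn]

lemma exists_walk (hn : 2 ≤ n) (u : Fin n) (m : ℕ) :
    ∃ p : (cycleGraph n).Walk u (u + (m : Fin n)), p.length = m := by
  induction m with
  | zero =>
    have h0 : u + ((0 : ℕ) : Fin n) = u := by push_cast; ring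
    rw [h0]
    exact ⟨SimpleGraph.Walk.nil, rfl⟩
  | succ m ih =>
    obtain ⟨p, hp⟩ := ih
    have hadj : (cycleGraph n).Adj (u + (m : Fin n)) (u + ((m + 1 : ℕ) : Fin n)) := by
      have h2 : u + ((m + 1 : ℕ) : Fin n) = (u + (m : Fin n)) + 1 := by push_cast; ring
      rw [h2]; exact adj_succ hn _
    exact ⟨p.concat hadj, by rw [SimpleGraph.Walk.length_concat, hp]⟩

lemma dist_le_sub (hn : 2 ≤ n) (u v : Fin n) :
    (cycleGraph n).dist u v ≤ (v - u).val := by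
  obtain ⟨p, hp⟩ := exists_walk hn u (v - u).val
  have h1 : u + (((v - u).val : ℕ) : Fin n) = v := by
    rw [Fin.cast_val_eq_self]; ring
  have h2 := SimpleGraph.dist_le p
  rw [hp] at h2
  rw [h1] at h2
  exact h2

lemma walk_decomp {u v : Fin n} (p : (cycleGraph n).Walk u v) :
    ∃ a b : ℕ, a + b = p.length ∧ v - u = (a : Fin n) - (b : Fin n) := by
  induction p with
  | nil => exact ⟨0, 0, rfl, by simp⟩
  | @cons u w v h p ih =>
    obtain ⟨a, b, hab, hv⟩ := ih
    rw [cycleGraph_adj'] at h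
    rcases h with h | h
    · -- (u - w).val = 1, so u - w = 1
      have h1 : u - w = 1 := by
        have : ((u - w).val : Fin n) = u - w := Fin.cast_val_eq_self _
        rw [h] at this
        simpa using this.symm
      refine ⟨a, b + 1, by simp [SimpleGraph.Walk.length_cons]; omega, ?_⟩
      have : v - u = (v - w) - (u - w) := by ring
      rw [this, hv, h1]
      push_cast
      ring
    · have h1 : w - u = 1 := by
        have : ((w - u).val : Fin n) = w - u := Fin.cast_val_eq_self _
        rw [h] at this
        simpa using this.symm
      refine ⟨a + 1, b, by simp [SimpleGraph.Walk.length_cons]; omega, ?_⟩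
      have : v - u = (v - w) + (w - u) := by ring
      rw [this, hv, h1]
      push_cast
      ring

lemma cyc_dist_eq (hn : 2 ≤ n) (u v : Fin n) :
    (cycleGraph n).dist u v = min (v - u).val (u - v).val := by
  refine le_antisymm (le_min (dist_le_sub hn u v) ?_) ?_
  · rw [SimpleGraph.dist_comm]; exact dist_le_sub hn v u
  · have hr : (cycleGraph n).Reachable u v := cycleGraph_preconnected u v
    obtain ⟨p, hp⟩ := hr.exists_walk_length_eq_dist
    obtain ⟨a, b, hab, hv⟩ := walk_decomp p
    rcases le_total b a with hba | hab'
    · have h1 : v - u = ((a - b : ℕ) : Fin n) := by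
        rw [hv]; push_cast [Nat.cast_sub hba]; ring
      have h2 : (v - u).val ≤ a - b := by
        rw [h1, Fin.val_natCast]; exact Nat.mod_le _ _
      have := min_le_left (v - u).val (u - v).val
      omega
    · have h1 : u - v = ((b - a : ℕ) : Fin n) := by
        have : u - v = -(v - u) := by ring
        rw [this, hv]; push_cast [Nat.cast_sub hab']; ring
      have h2 : (u - v).val ≤ b - a := by
        rw [h1, Fin.val_natCast]; exact Nat.mod_le _ _
      have := min_le_right (v - u).val (u - v).val
      omega


variable {k : ℕ}

lemma val_add_one_of_lt {n : ℕ} [NeZero n] (x : Fin n) (h : x.val + 1 < n) :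
    (x + 1).val = x.val + 1 := by
  have hn : 2 ≤ n := by omega
  rw [Fin.val_add, val_one_of hn, Nat.mod_eq_of_lt h]

lemma adj_pred {n : ℕ} [NeZero n] (hn : 2 ≤ n) (u : Fin n) : (cycleGraph n).Adj u (u - 1) := by
  rw [cycleGraph_adj']
  left
  have h1 : u - (u - 1) = 1 := by ring
  rw [h1, val_one_of hn]

lemma dist_le_k (hk : 1 ≤ k) (u v : Fin (2*k+1)) :
    (cycleGraph (2*k+1)).dist u v ≤ k := by
  rw [cyc_dist_eq (by omega)]
  rcases eq_or_ne v u with rfl | h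
  · simp
  · have := fin_sub_add_sub v u h
    omega

lemma mmd_iff (hk : 1 ≤ k) (u v : Fin (2*k+1)) :
    MutuallyMaxDistant (cycleGraph (2*k+1)) u v ↔
      ((v - u).val = k ∨ (v - u).val = k + 1) := by
  have hn2 : 2 ≤ 2*k+1 := by omega
  have htlt : (v - u).val < 2*k+1 := (v - u).isLt
  constructor
  · rintro ⟨h1, _⟩
    by_contra hcon
    push_neg at hcon
    obtain ⟨hc1, hc2⟩ := hcon
    set t := (v - u).val with ht
    rcases Nat.eq_zero_or_pos t with ht0 | htpos
    · -- u = v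
      have hvu : v = u := by
        have : v - u = 0 := by
          apply Fin.ext
          rw [← ht, ht0]; simp
        have := sub_eq_zero.mp this
        exact this
      subst hvu
      have hadj := adj_succ hn2 v
      have := h1 _ hadj
      rw [cyc_dist_eq hn2, cyc_dist_eq hn2] at this
      have hne : v + 1 ≠ v := by
        intro hc
        have : (v + 1) - v = 0 := by rw [hc]; ring
        have h1' : (v + 1) - v = 1 := by ring
        rw [h1'] at this
        have := congrArg Fin.val this
        rw [val_one_of hn2] at this
        simp at this
      have hsum := fin_sub_add_sub (v+1) v hne
      have hv1 : ((v+1) - v).val = 1 := by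
        have h1' : (v + 1) - v = 1 := by ring
        rw [h1', val_one_of hn2]
      simp only [sub_self, Fin.val_zero] at this
      omega
    · have hne : v ≠ u := by
        intro hc; rw [hc] at ht; simp [sub_self] at ht; omega
      have hsum := fin_sub_add_sub v u hne
      rcases lt_or_ge t k with htk | htk
      · -- 1 ≤ t ≤ k - 1, use w = u - 1
        have hadj := adj_pred hn2 u
        have hd := h1 _ hadj
        rw [cyc_dist_eq hn2, cyc_dist_eq hn2] at hd
        have hvw : v - (u - 1) = (v - u) + 1 := by ring
        have hvwval : (v - (u - 1)).val = t + 1 := by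
          rw [hvw]; exact val_add_one_of_lt _ (by omega)
        have hnew : v ≠ u - 1 := by
          intro hc
          have : v - (u - 1) = 0 := by rw [hc]; ring
          rw [this] at hvwval
          simp at hvwval
        have hsum2 := fin_sub_add_sub v (u - 1) hnew
        omega
      · -- k + 2 ≤ t, use w = u + 1
        have hadj := adj_succ hn2 u
        have hd := h1 _ hadj
        rw [cyc_dist_eq hn2, cyc_dist_eq hn2] at hd
        have hwv : (u + 1) - v = (u - v) + 1 := by ring
        have hwvval : ((u + 1) - v).val = (u - v).val + 1 := by
          rw [hwv]; exact val_add_one_of_lt _ (by omega)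
        have hnew : u + 1 ≠ v := by
          intro hc
          have : (u + 1) - v = 0 := by rw [hc]; ring
          rw [this] at hwvval
          simp at hwvval
        have hsum2 := fin_sub_add_sub (u+1) v hnew
        omega
  · intro h
    have hne : v ≠ u := by
      intro hc; rw [hc] at h; simp [sub_self] at h; omega
    have hsum := fin_sub_add_sub v u hne
    have hdvu : (cycleGraph (2*k+1)).dist v u = k := by
      rw [cyc_dist_eq hn2]; omega
    have hduv : (cycleGraph (2*k+1)).dist u v = k := by
      rw [cyc_dist_eq hn2]; omega
    constructor
    · intro w _; rw [hdvu]; exact dist_le_k hk v w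
    · intro w _; rw [hduv]; exact dist_le_k hk u w

end CycAux

theorem stmt5 (k : ℕ) (hk : 1 ≤ k) :
    Nonempty (SRG (cycleGraph (2 * k + 1)) ≃g cycleGraph (2 * k + 1)) := by
  have hn2 : 2 ≤ 2 * k + 1 := by omega
  have hkval : ((k : Fin (2 * k + 1))).val = k := by
    rw [Fin.val_natCast]; exact Nat.mod_eq_of_lt (by omega)
  have hk1val : ((k : Fin (2 * k + 1)) + 1).val = k + 1 := by
    rw [CycAux.val_add_one_of_lt _ (by omega), hkval]
  have h1val : (1 : Fin (2 * k + 1)).val = 1 := CycAux.val_one_of hn2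
  have hzero : ((2 * k + 1 : ℕ) : Fin (2 * k + 1)) = 0 := by
    apply Fin.ext; rw [Fin.val_natCast, Nat.mod_self]; rfl
  have h2inv : ((k : Fin (2 * k + 1)) + 1) * 2 = 1 := by
    have h : ((k : Fin (2 * k + 1)) + 1) * 2 = ((2 * k + 2 : ℕ) : Fin (2 * k + 1)) := by
      push_cast; ring
    rw [h]
    apply Fin.ext
    rw [Fin.val_natCast, h1val, show 2 * k + 2 = (2 * k + 1) + 1 by omega, Nat.add_mod_left]
    exact Nat.mod_eq_of_lt (by omega)
  have hneg : (k : Fin (2 * k + 1)) + ((k : Fin (2 * k + 1)) + 1) = 0 := by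
    have h : (k : Fin (2 * k + 1)) + ((k : Fin (2 * k + 1)) + 1)
        = ((2 * k + 1 : ℕ) : Fin (2 * k + 1)) := by push_cast; ring
    rw [h, hzero]
  have h2cancel : ∀ x : Fin (2 * k + 1), 2 * x = 1 ↔ x = (k : Fin (2 * k + 1)) + 1 := by
    intro x
    constructor
    · intro h
      have hx : x = ((k : Fin (2 * k + 1)) + 1) * (2 * x) := by
        rw [← mul_assoc, h2inv, one_mul]
      rw [hx, h, mul_one]
    · rintro rfl; rw [mul_comm 2 ((k : Fin (2 * k + 1)) + 1)]; exact h2inv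
  have hsrg : ∀ u v : Fin (2 * k + 1),
      (SRG (cycleGraph (2 * k + 1))).Adj u v ↔ ((v - u).val = k ∨ (v - u).val = k + 1) := by
    intro u v
    constructor
    · rintro ⟨-, h⟩; exact (CycAux.mmd_iff hk u v).mp h
    · intro h
      refine ⟨?_, (CycAux.mmd_iff hk u v).mpr h⟩
      rintro rfl
      simp only [sub_self, Fin.val_zero] at h
      omega
  let e : Fin (2 * k + 1) ≃ Fin (2 * k + 1) :=
    { toFun := fun u => 2 * u
      invFun := fun u => ((k : Fin (2 * k + 1)) + 1) * u
      left_inv := fun u => by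
        show ((k : Fin (2 * k + 1)) + 1) * (2 * u) = u
        rw [← mul_assoc, h2inv, one_mul]
      right_inv := fun u => by
        show 2 * (((k : Fin (2 * k + 1)) + 1) * u) = u
        rw [← mul_assoc, mul_comm (2 : Fin (2 * k + 1)), h2inv, one_mul] }
  refine ⟨{ toEquiv := e, map_rel_iff' := ?_ }⟩
  intro u v
  show (cycleGraph (2 * k + 1)).Adj (2 * u) (2 * v) ↔ (SRG (cycleGraph (2 * k + 1))).Adj u v
  rw [cycleGraph_adj', hsrg u v]
  have huv : 2 * u - 2 * v = 2 * (u - v) := by ring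
  have hvu : 2 * v - 2 * u = 2 * (v - u) := by ring
  have hval1 : ∀ x : Fin (2 * k + 1), x.val = 1 ↔ x = 1 := by
    intro x; rw [Fin.ext_iff, h1val]
  have hvalk : (v - u).val = k ↔ v - u = (k : Fin (2 * k + 1)) := by
    rw [Fin.ext_iff, hkval]
  have hvalk1 : (v - u).val = k + 1 ↔ v - u = (k : Fin (2 * k + 1)) + 1 := by
    rw [Fin.ext_iff, hk1val]
  rw [huv, hvu, hval1, hval1, h2cancel, h2cancel, hvalk, hvalk1]
  have hflip : u - v = (k : Fin (2 * k + 1)) + 1 ↔ v - u = (k : Fin (2 * k + 1)) := by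
    constructor <;> intro h <;> linear_combination -h - hneg
  rw [hflip]
end
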